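/- Let X be a Tychonoff space and A ⊆ X a C-embedded subspace (every continuous real-valued function on A extends continuously to X). Then cl_{υX} A = υA, i.e., the closure of A in the Hewitt realcompactification of X is (equivalent to) the Hewitt realcompactification of A. -/

import Mathlib

def IsRealcompactSpace (Y : Type) [TopologicalSpace Y] : Prop :=
  ∃ (ι : Type) (f : Y → ι → ℝ), Topology.IsClosedEmbedding f

def hewitt (X : Type) [TopologicalSpace X] : Set (StoneCech X) :=
  ⋂₀ {C : Set (StoneCech X) |
      (∃ f : StoneCech X → ℝ, Continuous f ∧ C = {x | f x ≠ 0}) ∧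
        Set.range (stoneCechUnit : X → StoneCech X) ⊆ C}

open Topology Set

private lemma phi_cont : Continuous fun t : ℝ => t / (1 + |t|) :=
  continuous_id.div (continuous_const.add continuous_abs) (fun t => by positivity)

private lemma phi_lt (t : ℝ) : |t / (1 + |t|)| < 1 := by
  have h : (0:ℝ) < 1 + |t| := by positivity
  rw [abs_div, abs_of_pos h]
  exact (div_lt_one h).mpr (by linarith)

private lemma psi_phi (t : ℝ) : (t / (1 + |t|)) / (1 - |t / (1 + |t|)|) = t := by
  have h : (0:ℝ) < 1 + |t| := by positivity
  rw [abs_div, abs_of_pos h]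
  have h2 : 1 - |t| / (1 + |t|) = 1 / (1 + |t|) := by field_simp; ring
  rw [h2]
  field_simp

/-- Points of the Stone–Čech compactification are separated by continuous real functions. -/
private lemma sc_sep {X : Type} [TopologicalSpace X] :
    Function.Injective (fun (x : StoneCech X) (j : C(StoneCech X, ℝ)) => j x) := by
  intro x y hxy
  by_contra hne
  obtain ⟨f, hf0, hf1, -⟩ := exists_continuous_zero_one_of_isClosed
    (isClosed_singleton (x := x)) (isClosed_singleton (x := y))
    (Set.disjoint_singleton.mpr hne)
  have := congrFun hxy f
  simp only [hf0 rfl, hf1 rfl] at this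
  simp at this

/-- Every continuous real function on X extends continuously to the hewitt part;
we package this as: there is a continuous function on the StoneCech whose
"cozero constraint" is in the family and which restricts correctly. -/
theorem stmt11 (X : Type) [TopologicalSpace X] [T35Space X] (A : Set X)
    (hA : ∀ f : A → ℝ, Continuous f → ∃ g : X → ℝ, Continuous g ∧ ∀ a : A, g a = f a) :
    IsRealcompactSpace ↥(closure (stoneCechUnit '' A) ∩ hewitt X) ∧
    Dense {p : ↥(closure (stoneCechUnit '' A) ∩ hewitt X) |
      (p : StoneCech X) ∈ stoneCechUnit '' A} ∧
    ∀ f : A → ℝ, Continuous f →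
      ∃ g : ↥(closure (stoneCechUnit '' A) ∩ hewitt X) → ℝ, Continuous g ∧
        ∀ (a : A) (h : stoneCechUnit (a : X) ∈ closure (stoneCechUnit '' A) ∩ hewitt X),
          g ⟨stoneCechUnit (a : X), h⟩ = f a := by
  classical
  set 𝒮 : Set (Set (StoneCech X)) := {C : Set (StoneCech X) |
      (∃ f : StoneCech X → ℝ, Continuous f ∧ C = {x | f x ≠ 0}) ∧
        Set.range (stoneCechUnit : X → StoneCech X) ⊆ C} with h𝒮
  have hHdef : hewitt X = ⋂₀ 𝒮 := rfl
  set A' : Set (StoneCech X) := stoneCechUnit '' A with hA'def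
  set S : Set (StoneCech X) := closure A' ∩ hewitt X with hSdef
  have hA'H : A' ⊆ hewitt X := by
    rintro x ⟨a, -, rfl⟩
    rw [hHdef, mem_sInter]
    exact fun C hC => hC.2 ⟨a, rfl⟩
  have hA'S : A' ⊆ S := fun x hx => ⟨subset_closure hx, hA'H hx⟩
  refine ⟨?_, ?_, ?_⟩
  · -- realcompactness
    set J := C(StoneCech X, ℝ) with hJ
    set e : StoneCech X → J → ℝ := fun x j => j x with he_def
    have he_cont : Continuous e := continuous_pi fun j => j.continuous
    have he : Topology.IsClosedEmbedding e := he_cont.isClosedEmbedding sc_sep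
    -- choose, for each constraint set, a defining function
    let fC : ↥𝒮 → C(StoneCech X, ℝ) := fun C =>
      ⟨(C.2.1).choose, (C.2.1).choose_spec.1⟩
    have hfC : ∀ C : ↥𝒮, (C : Set (StoneCech X)) = {x | fC C x ≠ 0} := fun C =>
      (C.2.1).choose_spec.2
    have hfC_ne : ∀ (C : ↥𝒮) (p : ↥S), fC C (p : StoneCech X) ≠ 0 := by
      intro C p
      have hp : (p : StoneCech X) ∈ (C : Set (StoneCech X)) := by
        have := p.2.2
        rw [hHdef, mem_sInter] at this
        exact this _ C.2
      rwa [hfC C] at hp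
    refine ⟨J ⊕ ↥𝒮, fun p => Sum.elim (fun j => e (p : StoneCech X) j)
      (fun C => (fC C (p : StoneCech X))⁻¹), ?_⟩
    set F : ↥S → (J ⊕ ↥𝒮) → ℝ := fun p => Sum.elim (fun j => e (p : StoneCech X) j)
      (fun C => (fC C (p : StoneCech X))⁻¹) with hF
    have hF_cont : Continuous F := by
      apply continuous_pi
      rintro (j | C)
      · exact j.continuous.comp continuous_subtype_val
      · exact ((fC C).continuous.comp continuous_subtype_val).inv₀ (fun p => hfC_ne C p)
    have hg_cont : Continuous (fun (y : (J ⊕ ↥𝒮) → ℝ) (j : J) => y (Sum.inl j)) :=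
      continuous_pi fun j => continuous_apply (Sum.inl j)
    have hcomp : (fun (y : (J ⊕ ↥𝒮) → ℝ) (j : J) => y (Sum.inl j)) ∘ F
        = e ∘ (Subtype.val : ↥S → StoneCech X) := rfl
    have hind : IsInducing F :=
      IsInducing.of_comp hF_cont hg_cont
        (hcomp ▸ he.isInducing.comp IsInducing.subtypeVal)
    have hinj : Function.Injective F := by
      intro p q hpq
      have : (e ∘ (Subtype.val : ↥S → StoneCech X)) p
          = (e ∘ (Subtype.val : ↥S → StoneCech X)) q := by
        rw [← hcomp]; simp [hpq]
      exact Subtype.val_injective (sc_sep this)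
    have hrange : Set.range F =
        ((fun (y : (J ⊕ ↥𝒮) → ℝ) (j : J) => y (Sum.inl j)) ⁻¹' (e '' closure A')) ∩
        ⋂ C : ↥𝒮, {y : (J ⊕ ↥𝒮) → ℝ | y (Sum.inr C) * y (Sum.inl (fC C)) = 1} := by
      ext y
      constructor
      · rintro ⟨p, rfl⟩
        refine ⟨⟨(p : StoneCech X), p.2.1, rfl⟩, ?_⟩
        rw [mem_iInter]
        intro C
        exact inv_mul_cancel₀ (hfC_ne C p)
      · rintro ⟨⟨x, hx, hex⟩, hy⟩
        rw [mem_iInter] at hy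
        have hxH : x ∈ hewitt X := by
          rw [hHdef, mem_sInter]
          intro C hC
          have h1 : y (Sum.inl (fC ⟨C, hC⟩)) = fC ⟨C, hC⟩ x := by
            have := congrFun hex (fC ⟨C, hC⟩); exact this.symm
          have h2 : y (Sum.inr ⟨C, hC⟩) * y (Sum.inl (fC ⟨C, hC⟩)) = 1 := hy ⟨C, hC⟩
          rw [h1] at h2
          have hne : fC ⟨C, hC⟩ x ≠ 0 := by
            intro h0; rw [h0, mul_zero] at h2; exact absurd h2 (by norm_num)
          have := hfC ⟨C, hC⟩
          simp only at this
          rw [this]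
          exact hne
        refine ⟨⟨x, hx, hxH⟩, ?_⟩
        funext i
        cases i with
        | inl j => exact congrFun hex j
        | inr C =>
          have h1 : y (Sum.inl (fC C)) = fC C x := (congrFun hex (fC C)).symm
          have h2 : y (Sum.inr C) * y (Sum.inl (fC C)) = 1 := hy C
          rw [h1] at h2
          show (fC C x)⁻¹ = y (Sum.inr C)
          exact (eq_inv_of_mul_eq_one_left h2).symm
    have hclosed : IsClosed (Set.range F) := by
      rw [hrange]
      refine IsClosed.inter (IsClosed.preimage hg_cont
        (he.isClosedMap _ isClosed_closure)) ?_
      exact isClosed_iInter fun C => isClosed_eq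
        ((continuous_apply (Sum.inr C)).mul (continuous_apply (Sum.inl (fC C))))
        continuous_const
    exact ⟨⟨hind, hinj⟩, hclosed⟩
  · -- density
    intro p
    rw [closure_subtype]
    have himg : ((Subtype.val : ↥S → StoneCech X) ''
        {p : ↥S | (p : StoneCech X) ∈ A'}) = A' := by
      ext x
      constructor
      · rintro ⟨p, hp, rfl⟩; exact hp
      · intro hx; exact ⟨⟨x, hA'S hx⟩, hx, rfl⟩
    rw [himg]
    exact p.2.1
  · -- extension
    intro f hf
    obtain ⟨g, hg, hga⟩ := hA f hf
    -- compress g into Icc (-1) 1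
    set q : X → Icc (-1:ℝ) 1 := fun x =>
      ⟨g x / (1 + |g x|), abs_le.mp (le_of_lt (phi_lt (g x)))⟩ with hq_def
    have hq : Continuous q := Continuous.subtype_mk (phi_cont.comp hg) _
    let Ge : StoneCech X → Icc (-1:ℝ) 1 := stoneCechExtend hq
    set G : StoneCech X → ℝ := fun x => (Ge x : ℝ) with hG_def
    have hG : Continuous G :=
      continuous_subtype_val.comp (continuous_stoneCechExtend hq)
    have hGu : ∀ a : X, G (stoneCechUnit a) = g a / (1 + |g a|) := by
      intro a
      have h1 : Ge (stoneCechUnit a) = q a := congrFun (stoneCechExtend_extends hq) a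
      show (Ge (stoneCechUnit a) : ℝ) = _
      rw [h1]
    -- the constraint set
    have hCmem : {x : StoneCech X | 1 - |G x| ≠ 0} ∈ 𝒮 := by
      constructor
      · exact ⟨fun x => 1 - |G x|, continuous_const.sub hG.abs, rfl⟩
      · rintro x ⟨a, rfl⟩
        show 1 - |G (stoneCechUnit a)| ≠ 0
        rw [hGu a]
        have := phi_lt (g a)
        intro h; linarith
    have hne : ∀ p : ↥S, 1 - |G (p : StoneCech X)| ≠ 0 := by
      intro p
      have := p.2.2
      rw [hHdef, mem_sInter] at this
      exact this _ hCmem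
    refine ⟨fun p => G (p : StoneCech X) / (1 - |G (p : StoneCech X)|), ?_, ?_⟩
    · exact (hG.comp continuous_subtype_val).div
        (continuous_const.sub (hG.abs.comp continuous_subtype_val)) hne
    · intro a h
      show G (stoneCechUnit (a : X)) / (1 - |G (stoneCechUnit (a : X))|) = f a
      rw [hGu (a : X), psi_phi (g (a : X)), hga a]
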